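/- Let M, N ∈ ⋀X be nonzero, and set b = max{bot(M), bot(N)} and t = min{top(M), top(N)}. Then: (i) if dim(isp(M) + isp(N)) ≥ t + 2, then isp(M+N) = isp(M) ∩ isp(N) and dim isp(M+N) ≤ b − 2; (ii) if dim(osp(M) ∩ osp(N)) ≤ b − 2, then osp(M+N) = osp(M) + osp(N) and dim osp(M+N) ≥ t + 2. -/
import Mathlib


/-!
Setup: `X` is a finite-dimensional real inner product space, `⋀X` its exterior
algebra.  We hypothesize a bilinear form `innE` on the exterior algebra which makes
the wedges of any orthonormal basis of `X` (over increasing index sets) orthonormal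
— this characterizes the inner product of the paper — and a bilinear left
contraction `lcontr` adjoint to the wedge product: `⟨M⌟N, L⟩ = ⟨N, M∧L⟩`.
-/

noncomputable section

open ExteriorAlgebra

/-- The wedge product `v_{i₁} ∧ ⋯ ∧ v_{i_p}` of the vectors `v i`, `i ∈ s`,
taken in increasing order of the indices. -/
def wedgeOf {X : Type*} [AddCommGroup X] [Module ℝ X] {n : ℕ}
    (v : Fin n → X) (s : Finset (Fin n)) : ExteriorAlgebra ℝ X :=
  ((s.sort (· ≤ ·)).map fun i => ι ℝ (v i)).prod

/-- The inner space `isp M = {v : v ∧ M = 0}`. -/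
def isp {X : Type*} [AddCommGroup X] [Module ℝ X]
    (M : ExteriorAlgebra ℝ X) : Submodule ℝ X where
  carrier := {x | ι ℝ x * M = 0}
  add_mem' := by
    intro a b ha hb
    simp only [Set.mem_setOf_eq, map_add, add_mul] at *
    rw [ha, hb, add_zero]
  zero_mem' := by simp
  smul_mem' := by
    intro c x hx
    simp only [Set.mem_setOf_eq, map_smul, smul_mul_assoc] at *
    rw [hx, smul_zero]

/-- The space `{v : v ⌟ M = 0}`, whose orthogonal complement is the outer space. -/
def ospKer {X : Type*} [NormedAddCommGroup X] [InnerProductSpace ℝ X]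
    (lcontr : ExteriorAlgebra ℝ X →ₗ[ℝ] ExteriorAlgebra ℝ X →ₗ[ℝ] ExteriorAlgebra ℝ X)
    (M : ExteriorAlgebra ℝ X) : Submodule ℝ X where
  carrier := {x | lcontr (ι ℝ x) M = 0}
  add_mem' := by
    intro a b ha hb
    simp only [Set.mem_setOf_eq, map_add, LinearMap.add_apply] at *
    rw [ha, hb, add_zero]
  zero_mem' := by simp
  smul_mem' := by
    intro c x hx
    simp only [Set.mem_setOf_eq, map_smul, LinearMap.smul_apply] at *
    rw [hx, smul_zero]

/-- The outer space `osp M = {v : v ⌟ M = 0}ᗮ`. -/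
def osp {X : Type*} [NormedAddCommGroup X] [InnerProductSpace ℝ X]
    (lcontr : ExteriorAlgebra ℝ X →ₗ[ℝ] ExteriorAlgebra ℝ X →ₗ[ℝ] ExteriorAlgebra ℝ X)
    (M : ExteriorAlgebra ℝ X) : Submodule ℝ X :=
  (ospKer lcontr M)ᗮ

/-- `innE` is the inner product of `⋀X`: for every orthonormal basis of `X`, the
wedges of basis vectors over increasing index sets form an orthonormal family. -/
def InnerOK {X : Type*} [NormedAddCommGroup X] [InnerProductSpace ℝ X]
    (innE : ExteriorAlgebra ℝ X →ₗ[ℝ] ExteriorAlgebra ℝ X →ₗ[ℝ] ℝ) : Prop :=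
  ∀ (m : ℕ) (w : OrthonormalBasis (Fin m) ℝ X) (s t : Finset (Fin m)),
    innE (wedgeOf (⇑w) s) (wedgeOf (⇑w) t) = if s = t then 1 else 0

/-- `lcontr` is the left contraction: `⟨M ⌟ N, L⟩ = ⟨N, M ∧ L⟩`. -/
def ContrOK {X : Type*} [NormedAddCommGroup X] [InnerProductSpace ℝ X]
    (innE : ExteriorAlgebra ℝ X →ₗ[ℝ] ExteriorAlgebra ℝ X →ₗ[ℝ] ℝ)
    (lcontr : ExteriorAlgebra ℝ X →ₗ[ℝ] ExteriorAlgebra ℝ X →ₗ[ℝ] ExteriorAlgebra ℝ X) :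
    Prop :=
  ∀ M N L : ExteriorAlgebra ℝ X, innE (lcontr M N) L = innE N (M * L)


/-- Projection onto the grade-`p` homogeneous component of the exterior algebra. -/
def gradeProj {X : Type*} [AddCommGroup X] [Module ℝ X] (p : ℕ) :
    ExteriorAlgebra ℝ X →ₗ[ℝ] ExteriorAlgebra ℝ X :=
  GradedAlgebra.proj (fun i : ℕ => ⋀[ℝ]^i X) p

/-- The bottom grade: least `p` with `⟨M⟩_p ≠ 0`. -/
noncomputable def bgrade {X : Type*} [AddCommGroup X] [Module ℝ X]
    (M : ExteriorAlgebra ℝ X) : ℕ :=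
  sInf {p | gradeProj p M ≠ 0}

/-- The top grade: greatest `p` with `⟨M⟩_p ≠ 0`. -/
noncomputable def tgrade {X : Type*} [AddCommGroup X] [Module ℝ X]
    (M : ExteriorAlgebra ℝ X) : ℕ :=
  sSup {p | gradeProj p M ≠ 0}


set_option linter.unusedSectionVars false

section WedgeCombinatorics

variable {X : Type*} [AddCommGroup X] [Module ℝ X] {n : ℕ} (v : Fin n → X)

lemma wedgeOf_empty : wedgeOf v ∅ = 1 := by simp [wedgeOf]

lemma wedgeOf_singleton (i : Fin n) : wedgeOf v {i} = ι ℝ (v i) := by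
  simp [wedgeOf]

lemma iota_swap (x y : X) : ι ℝ x * ι ℝ y = -(ι ℝ y * ι ℝ x) :=
  eq_neg_of_add_eq_zero_left (ExteriorAlgebra.ι_add_mul_swap x y)

lemma wedgeOf_insert_of_forall_le {i : Fin n} {s : Finset (Fin n)} (hi : i ∉ s)
    (h : ∀ j ∈ s, i ≤ j) : wedgeOf v (insert i s) = ι ℝ (v i) * wedgeOf v s := by
  unfold wedgeOf
  rw [Finset.sort_insert _ h hi, List.map_cons, List.prod_cons]

lemma wedgeOf_min_erase {s : Finset (Fin n)} (hs : s.Nonempty) :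
    wedgeOf v s = ι ℝ (v (s.min' hs)) * wedgeOf v (s.erase (s.min' hs)) := by
  conv_lhs => rw [← Finset.insert_erase (s.min'_mem hs)]
  exact wedgeOf_insert_of_forall_le v (Finset.notMem_erase _ s)
    (fun j hj => s.min'_le j (Finset.mem_of_mem_erase hj))

lemma iota_mul_wedgeOf_mem :
    ∀ s : Finset (Fin n), ∀ i ∈ s, ι ℝ (v i) * wedgeOf v s = 0 := by
  intro s
  induction s using Finset.strongInduction with
  | _ s ih =>
    intro i h
    have hne : s.Nonempty := ⟨i, h⟩
    set a := s.min' hne with ha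
    rw [wedgeOf_min_erase v hne, ← ha]
    by_cases hia : i = a
    · rw [hia, ← mul_assoc, ExteriorAlgebra.ι_sq_zero, zero_mul]
    · have hi' : i ∈ s.erase a := Finset.mem_erase.mpr ⟨hia, h⟩
      rw [← mul_assoc, iota_swap, neg_mul, mul_assoc,
        ih (s.erase a) (Finset.erase_ssubset (s.min'_mem hne)) i hi', mul_zero, neg_zero]

lemma iota_mul_wedgeOf_notMem :
    ∀ s : Finset (Fin n), ∀ i ∉ s, ∃ ε : ℝ, (ε = 1 ∨ ε = -1) ∧
      ι ℝ (v i) * wedgeOf v s = ε • wedgeOf v (insert i s) := by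
  intro s
  induction s using Finset.strongInduction with
  | _ s ih =>
    intro i hi
    by_cases hall : ∀ j ∈ s, i ≤ j
    · exact ⟨1, Or.inl rfl, by
        rw [one_smul, wedgeOf_insert_of_forall_le v hi hall]⟩
    · push_neg at hall
      obtain ⟨j, hjs, hji⟩ := hall
      have hne : s.Nonempty := ⟨j, hjs⟩
      set a := s.min' hne with ha
      have hai : a < i := lt_of_le_of_lt (s.min'_le j hjs) hji
      have hia : i ∉ s.erase a := fun h => hi (Finset.mem_of_mem_erase h)
      obtain ⟨ε, hε, heq⟩ := ih (s.erase a) (Finset.erase_ssubset (s.min'_mem hne)) i hia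
      refine ⟨-ε, by rcases hε with rfl | rfl <;> simp, ?_⟩
      have hrw2 : ι ℝ (v a) * wedgeOf v (insert i (s.erase a)) =
          wedgeOf v (insert i s) := by
        have hanotin : a ∉ insert i (s.erase a) := by
          simp only [Finset.mem_insert]
          rintro (rfl | h)
          · exact lt_irrefl _ hai
          · exact Finset.notMem_erase _ _ h
        have hle : ∀ j' ∈ insert i (s.erase a), a ≤ j' := by
          intro j' hj'
          rcases Finset.mem_insert.mp hj' with rfl | hj'
          · exact le_of_lt hai
          · exact s.min'_le j' (Finset.mem_of_mem_erase hj')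
        rw [← wedgeOf_insert_of_forall_le v hanotin hle, Finset.insert_comm,
          Finset.insert_erase (s.min'_mem hne)]
      calc ι ℝ (v i) * wedgeOf v s
          = ι ℝ (v i) * (ι ℝ (v a) * wedgeOf v (s.erase a)) := by
            rw [← wedgeOf_min_erase v hne]
        _ = -(ι ℝ (v a) * (ι ℝ (v i) * wedgeOf v (s.erase a))) := by
            rw [← mul_assoc, iota_swap, neg_mul, mul_assoc]
        _ = -(ι ℝ (v a) * (ε • wedgeOf v (insert i (s.erase a)))) := by rw [heq]
        _ = (-ε) • (ι ℝ (v a) * wedgeOf v (insert i (s.erase a))) := by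
            rw [mul_smul_comm, neg_smul]
        _ = (-ε) • wedgeOf v (insert i s) := by rw [hrw2]

lemma prod_map_mem_power (l : List (Fin n)) :
    ((l.map fun i => ι ℝ (v i)).prod) ∈ ⋀[ℝ]^(l.length) X := by
  induction l with
  | nil =>
    simp only [List.map_nil, List.prod_nil, List.length_nil, pow_zero]
    exact Submodule.mem_one.mpr ⟨1, map_one _⟩
  | cons a l ihl =>
    rw [List.map_cons, List.prod_cons, List.length_cons]
    have hpow : (⋀[ℝ]^(l.length + 1) X) =
        LinearMap.range (ι ℝ : X →ₗ[ℝ] ExteriorAlgebra ℝ X) * ⋀[ℝ]^(l.length) X :=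
      pow_succ' _ _
    rw [hpow]
    exact Submodule.mul_mem_mul ⟨v a, rfl⟩ ihl

lemma wedgeOf_mem_power (s : Finset (Fin n)) : wedgeOf v s ∈ ⋀[ℝ]^(s.card) X := by
  have := prod_map_mem_power v (s.sort (· ≤ ·))
  rwa [Finset.length_sort] at this

lemma gradeProj_wedgeOf (p : ℕ) (s : Finset (Fin n)) :
    gradeProj p (wedgeOf v s) = if s.card = p then wedgeOf v s else 0 := by
  unfold gradeProj
  rw [GradedAlgebra.proj_apply]
  by_cases h : s.card = p
  · rw [if_pos h]
    subst h
    exact DirectSum.decompose_of_mem_same _ (wedgeOf_mem_power v s)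
  · rw [if_neg h]
    exact DirectSum.decompose_of_mem_ne _ (wedgeOf_mem_power v s) h

end WedgeCombinatorics

section BasisMachinery

open Module

variable {X : Type*} [NormedAddCommGroup X] [InnerProductSpace ℝ X] [FiniteDimensional ℝ X]

lemma span_wedgeOf_eq_top (w : OrthonormalBasis (Fin (finrank ℝ X)) ℝ X) :
    Submodule.span ℝ (Set.range (wedgeOf ⇑w)) = ⊤ := by
  set Sp := Submodule.span ℝ (Set.range (wedgeOf ⇑w)) with hSp
  have hmulι : ∀ (i : Fin (finrank ℝ X)), ∀ z ∈ Sp, ι ℝ (w i) * z ∈ Sp := by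
    intro i z hz
    induction hz using Submodule.span_induction with
    | mem x hx =>
      obtain ⟨s, rfl⟩ := hx
      by_cases his : i ∈ s
      · rw [iota_mul_wedgeOf_mem ⇑w s i his]; exact Sp.zero_mem
      · obtain ⟨ε, _, heq⟩ := iota_mul_wedgeOf_notMem ⇑w s i his
        rw [heq]; exact Sp.smul_mem _ (Submodule.subset_span ⟨_, rfl⟩)
    | zero => rw [mul_zero]; exact Sp.zero_mem
    | add a b _ _ ha hb => rw [mul_add]; exact Sp.add_mem ha hb
    | smul c a _ ha => rw [mul_smul_comm]; exact Sp.smul_mem _ ha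
  have hιmem : ∀ x : X, ι ℝ x ∈ Sp := by
    intro x
    rw [← w.sum_repr x, map_sum]
    refine Sp.sum_mem fun i _ => ?_
    rw [map_smul]
    refine Sp.smul_mem _ ?_
    rw [← wedgeOf_singleton ⇑w i]
    exact Submodule.subset_span ⟨_, rfl⟩
  have hone : (1 : ExteriorAlgebra ℝ X) ∈ Sp := by
    rw [← wedgeOf_empty ⇑w]; exact Submodule.subset_span ⟨_, rfl⟩
  have hlist : ∀ (l : List (Fin (finrank ℝ X))), ∀ z ∈ Sp, ((l.map fun i => ι ℝ (w i)).prod) * z ∈ Sp := by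
    intro l
    induction l with
    | nil => intro z hz; simpa using hz
    | cons a l ih =>
      intro z hz
      rw [List.map_cons, List.prod_cons, mul_assoc]
      exact hmulι a _ (ih z hz)
  have hmul : ∀ a ∈ Sp, ∀ b ∈ Sp, a * b ∈ Sp := by
    intro a ha
    induction ha using Submodule.span_induction with
    | mem x hx =>
      obtain ⟨s, rfl⟩ := hx
      intro b hb
      simpa only [wedgeOf] using hlist (s.sort (· ≤ ·)) b hb
    | zero => intro b hb; rw [zero_mul]; exact Sp.zero_mem
    | add a₁ a₂ _ _ h1 h2 => intro b hb; rw [add_mul]; exact Sp.add_mem (h1 b hb) (h2 b hb)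
    | smul c a _ h => intro b hb; rw [smul_mul_assoc]; exact Sp.smul_mem _ (h b hb)
  rw [eq_top_iff]
  intro z _
  refine ExteriorAlgebra.induction ?_ ?_ ?_ ?_ z
  · intro r; rw [Algebra.algebraMap_eq_smul_one]; exact Sp.smul_mem _ hone
  · exact hιmem
  · exact fun a b ha hb => hmul a ha b hb
  · exact fun a b ha hb => Sp.add_mem ha hb

variable {innE : ExteriorAlgebra ℝ X →ₗ[ℝ] ExteriorAlgebra ℝ X →ₗ[ℝ] ℝ}

lemma innE_wedge (hinn : InnerOK innE) (w : OrthonormalBasis (Fin (finrank ℝ X)) ℝ X)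
    (s t : Finset (Fin (finrank ℝ X))) :
    innE (wedgeOf ⇑w s) (wedgeOf ⇑w t) = if s = t then 1 else 0 :=
  hinn _ w s t

lemma expand_wedgeOf (hinn : InnerOK innE) (w : OrthonormalBasis (Fin (finrank ℝ X)) ℝ X)
    (M : ExteriorAlgebra ℝ X) :
    ∑ s : Finset (Fin (finrank ℝ X)), innE (wedgeOf ⇑w s) M • wedgeOf ⇑w s = M := by
  let T : ExteriorAlgebra ℝ X →ₗ[ℝ] ExteriorAlgebra ℝ X :=
    ∑ s : Finset (Fin (finrank ℝ X)),
      (LinearMap.toSpanSingleton ℝ _ (wedgeOf ⇑w s)).comp (innE (wedgeOf ⇑w s))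
  have hT : ∀ M, T M = ∑ s : Finset (Fin (finrank ℝ X)), innE (wedgeOf ⇑w s) M • wedgeOf ⇑w s := by
    intro M
    simp [T, LinearMap.sum_apply, LinearMap.toSpanSingleton_apply]
  have : T = LinearMap.id := by
    apply LinearMap.ext_on (span_wedgeOf_eq_top w)
    rintro _ ⟨t, rfl⟩
    rw [hT, LinearMap.id_apply]
    rw [Finset.sum_eq_single t]
    · rw [innE_wedge hinn w t t, if_pos rfl, one_smul]
    · intro s _ hst
      rw [innE_wedge hinn w s t, if_neg hst, zero_smul]
    · intro h; exact absurd (Finset.mem_univ t) h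
  rw [← hT, this, LinearMap.id_apply]

lemma innE_symm (hinn : InnerOK innE) (A B : ExteriorAlgebra ℝ X) :
    innE A B = innE B A := by
  obtain ⟨w⟩ : Nonempty (OrthonormalBasis (Fin (finrank ℝ X)) ℝ X) :=
    ⟨stdOrthonormalBasis ℝ X⟩
  have h : innE = innE.flip := by
    apply LinearMap.ext_on (span_wedgeOf_eq_top w)
    rintro _ ⟨s, rfl⟩
    apply LinearMap.ext_on (span_wedgeOf_eq_top w)
    rintro _ ⟨t, rfl⟩
    rw [LinearMap.flip_apply, innE_wedge hinn w, innE_wedge hinn w]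
    simp [eq_comm]
  conv_lhs => rw [h]
  rfl

lemma eq_zero_of_coef (hinn : InnerOK innE) (w : OrthonormalBasis (Fin (finrank ℝ X)) ℝ X)
    {M : ExteriorAlgebra ℝ X}
    (h : ∀ s : Finset (Fin (finrank ℝ X)), innE (wedgeOf ⇑w s) M = 0) : M = 0 := by
  rw [← expand_wedgeOf hinn w M]
  simp [h]

lemma eq_of_forall_innE (hinn : InnerOK innE) {A B : ExteriorAlgebra ℝ X}
    (h : ∀ L, innE A L = innE B L) : A = B := by
  obtain ⟨w⟩ : Nonempty (OrthonormalBasis (Fin (finrank ℝ X)) ℝ X) :=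
    ⟨stdOrthonormalBasis ℝ X⟩
  have : A - B = 0 := by
    apply eq_zero_of_coef hinn w
    intro s
    rw [map_sub, innE_symm hinn (wedgeOf ⇑w s) A, h, innE_symm hinn B (wedgeOf ⇑w s), sub_self]
  exact sub_eq_zero.mp this
  
end BasisMachinery

section GradeMachinery

open Module

variable {X : Type*} [NormedAddCommGroup X] [InnerProductSpace ℝ X] [FiniteDimensional ℝ X]
variable {innE : ExteriorAlgebra ℝ X →ₗ[ℝ] ExteriorAlgebra ℝ X →ₗ[ℝ] ℝ}

lemma gradeProj_expand (hinn : InnerOK innE) (w : OrthonormalBasis (Fin (finrank ℝ X)) ℝ X)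
    (p : ℕ) (M : ExteriorAlgebra ℝ X) :
    gradeProj p M = ∑ s ∈ Finset.univ.filter
        (fun s : Finset (Fin (finrank ℝ X)) => s.card = p),
      innE (wedgeOf ⇑w s) M • wedgeOf ⇑w s := by
  conv_lhs => rw [← expand_wedgeOf hinn w M]
  rw [map_sum, Finset.sum_filter]
  refine Finset.sum_congr rfl fun s _ => ?_
  rw [map_smul, gradeProj_wedgeOf, smul_ite, smul_zero]

lemma coef_gradeProj (hinn : InnerOK innE) (w : OrthonormalBasis (Fin (finrank ℝ X)) ℝ X)
    (p : ℕ) (M : ExteriorAlgebra ℝ X) (t : Finset (Fin (finrank ℝ X))) :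
    innE (wedgeOf ⇑w t) (gradeProj p M) =
      if t.card = p then innE (wedgeOf ⇑w t) M else 0 := by
  rw [gradeProj_expand hinn w p M, map_sum]
  simp only [map_smul, smul_eq_mul, innE_wedge hinn w, mul_ite, mul_one, mul_zero]
  rw [Finset.sum_ite_eq]
  simp [Finset.mem_filter]

lemma coef_eq_zero_of_gradeProj_eq_zero (hinn : InnerOK innE)
    (w : OrthonormalBasis (Fin (finrank ℝ X)) ℝ X) {M : ExteriorAlgebra ℝ X}
    {t : Finset (Fin (finrank ℝ X))} (h : gradeProj t.card M = 0) :
    innE (wedgeOf ⇑w t) M = 0 := by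
  have h2 := coef_gradeProj hinn w t.card M t
  rw [h, map_zero, if_pos rfl] at h2
  exact h2.symm

lemma gradeProj_eq_zero_of_coefs (hinn : InnerOK innE)
    (w : OrthonormalBasis (Fin (finrank ℝ X)) ℝ X) {M : ExteriorAlgebra ℝ X} {p : ℕ}
    (h : ∀ t : Finset (Fin (finrank ℝ X)), t.card = p → innE (wedgeOf ⇑w t) M = 0) :
    gradeProj p M = 0 := by
  rw [gradeProj_expand hinn w p M]
  refine Finset.sum_eq_zero fun s hs => ?_
  rw [h s (Finset.mem_filter.mp hs).2, zero_smul]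

lemma exists_coef_of_gradeProj_ne (hinn : InnerOK innE)
    (w : OrthonormalBasis (Fin (finrank ℝ X)) ℝ X) {M : ExteriorAlgebra ℝ X} {p : ℕ}
    (h : gradeProj p M ≠ 0) :
    ∃ t : Finset (Fin (finrank ℝ X)), t.card = p ∧ innE (wedgeOf ⇑w t) M ≠ 0 := by
  by_contra hno
  push_neg at hno
  exact h (gradeProj_eq_zero_of_coefs hinn w fun t ht => hno t ht)

lemma gradeSet_bddAbove (hinn : InnerOK innE) (M : ExteriorAlgebra ℝ X) :
    BddAbove {p | gradeProj p M ≠ 0} := by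
  refine ⟨finrank ℝ X, fun p hp => ?_⟩
  by_contra hlt
  push_neg at hlt
  refine hp (gradeProj_eq_zero_of_coefs hinn (stdOrthonormalBasis ℝ X) fun t ht => ?_)
  exfalso
  have h2 : t.card ≤ finrank ℝ X := by simpa using Finset.card_le_univ t
  omega

lemma gradeSet_nonempty (hinn : InnerOK innE) {M : ExteriorAlgebra ℝ X} (hM : M ≠ 0) :
    {p | gradeProj p M ≠ 0}.Nonempty := by
  by_contra h
  push_neg at h
  simp only [Set.eq_empty_iff_forall_notMem, Set.mem_setOf_eq, not_not] at h
  exact hM (eq_zero_of_coef hinn (stdOrthonormalBasis ℝ X) fun s =>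
    coef_eq_zero_of_gradeProj_eq_zero hinn _ (h s.card))

lemma bgrade_le_tgrade (hinn : InnerOK innE) {M : ExteriorAlgebra ℝ X} (hM : M ≠ 0) :
    bgrade M ≤ tgrade M :=
  le_csSup (gradeSet_bddAbove hinn M) (Nat.sInf_mem (gradeSet_nonempty hinn hM))

lemma gradeProj_bgrade_ne_zero (hinn : InnerOK innE) {M : ExteriorAlgebra ℝ X} (hM : M ≠ 0) :
    gradeProj (bgrade M) M ≠ 0 :=
  Nat.sInf_mem (gradeSet_nonempty hinn hM)

lemma gradeProj_tgrade_ne_zero (hinn : InnerOK innE) {M : ExteriorAlgebra ℝ X} (hM : M ≠ 0) :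
    gradeProj (tgrade M) M ≠ 0 :=
  Nat.sSup_mem (gradeSet_nonempty hinn hM) (gradeSet_bddAbove hinn M)

lemma gradeProj_eq_zero_of_lt_bgrade {M : ExteriorAlgebra ℝ X} {p : ℕ} (h : p < bgrade M) :
    gradeProj p M = 0 := by
  by_contra hne
  have h2 := Nat.sInf_le (show p ∈ {p | gradeProj p M ≠ 0} from hne)
  unfold bgrade at h
  omega

lemma gradeProj_eq_zero_of_tgrade_lt (hinn : InnerOK innE) {M : ExteriorAlgebra ℝ X} {p : ℕ}
    (h : tgrade M < p) : gradeProj p M = 0 := by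
  by_contra hne
  have h2 := le_csSup (gradeSet_bddAbove hinn M) (show p ∈ {p | gradeProj p M ≠ 0} from hne)
  unfold tgrade at h
  omega

lemma le_tgrade_of_gradeProj_ne (hinn : InnerOK innE) {M : ExteriorAlgebra ℝ X} {p : ℕ}
    (h : gradeProj p M ≠ 0) : p ≤ tgrade M :=
  le_csSup (gradeSet_bddAbove hinn M) h

lemma bgrade_neg (A : ExteriorAlgebra ℝ X) : bgrade (-A) = bgrade A := by
  unfold bgrade
  congr 1
  ext p
  simp [map_neg, neg_eq_zero]

lemma tgrade_neg (A : ExteriorAlgebra ℝ X) : tgrade (-A) = tgrade A := by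
  unfold tgrade
  congr 1
  ext p
  simp [map_neg, neg_eq_zero]

lemma gradeProj_iota_mul (x : X) (M : ExteriorAlgebra ℝ X) {q : ℕ}
    (hq : ∀ p, p + 1 = q → gradeProj p M = 0) :
    gradeProj q (ι ℝ x * M) = 0 := by
  classical
  conv_lhs => rw [← DirectSum.sum_support_decompose (fun i => ⋀[ℝ]^i X) M]
  rw [Finset.mul_sum, map_sum]
  refine Finset.sum_eq_zero fun p _ => ?_
  by_cases hpq : p + 1 = q
  · have h0 : ((DirectSum.decompose (fun i => ⋀[ℝ]^i X) M) p : ExteriorAlgebra ℝ X) = 0 := by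
      rw [← GradedAlgebra.proj_apply]
      exact hq p hpq
    rw [h0, mul_zero, map_zero]
  · have hmem : ι ℝ x * ((DirectSum.decompose (fun i => ⋀[ℝ]^i X) M) p : ExteriorAlgebra ℝ X)
        ∈ ⋀[ℝ]^(p+1) X := by
      have hpow : (⋀[ℝ]^(p+1) X) =
          LinearMap.range (ι ℝ : X →ₗ[ℝ] ExteriorAlgebra ℝ X) * ⋀[ℝ]^p X := pow_succ' _ _
      rw [hpow]
      exact Submodule.mul_mem_mul ⟨x, rfl⟩ (SetLike.coe_mem _)
    unfold gradeProj
    rw [GradedAlgebra.proj_apply]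
    exact DirectSum.decompose_of_mem_ne _ hmem hpq

lemma tgrade_iota_mul_le (hinn : InnerOK innE) {x : X} {M : ExteriorAlgebra ℝ X}
    (h : ι ℝ x * M ≠ 0) : tgrade (ι ℝ x * M) ≤ tgrade M + 1 := by
  refine csSup_le (gradeSet_nonempty hinn h) fun q hq => ?_
  by_contra hlt
  push_neg at hlt
  exact hq (gradeProj_iota_mul x M fun p hpq =>
    gradeProj_eq_zero_of_tgrade_lt hinn (by omega))

end GradeMachinery

section ContractionMachinery

open Module

variable {X : Type*} [NormedAddCommGroup X] [InnerProductSpace ℝ X] [FiniteDimensional ℝ X]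
variable {innE : ExteriorAlgebra ℝ X →ₗ[ℝ] ExteriorAlgebra ℝ X →ₗ[ℝ] ℝ}
variable {lcontr : ExteriorAlgebra ℝ X →ₗ[ℝ] ExteriorAlgebra ℝ X →ₗ[ℝ] ExteriorAlgebra ℝ X}

lemma innE_iota_mul_left (hinn : InnerOK innE) (hc : ContrOK innE lcontr)
    (x : X) (A B : ExteriorAlgebra ℝ X) :
    innE (ι ℝ x * A) B = innE (lcontr (ι ℝ x) B) A := by
  rw [innE_symm hinn (ι ℝ x * A) B, hc]

lemma lcontr_iota_iota (hinn : InnerOK innE) (hc : ContrOK innE lcontr)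
    (x y : X) (M : ExteriorAlgebra ℝ X) :
    lcontr (ι ℝ x) (lcontr (ι ℝ y) M) = -(lcontr (ι ℝ y) (lcontr (ι ℝ x) M)) := by
  apply eq_of_forall_innE hinn
  intro L
  rw [map_neg, LinearMap.neg_apply, hc, hc, hc, hc, ← mul_assoc, ← mul_assoc,
    iota_swap, neg_mul, map_neg]

lemma lcontr_iota_self (hinn : InnerOK innE) (hc : ContrOK innE lcontr)
    (x : X) (M : ExteriorAlgebra ℝ X) :
    lcontr (ι ℝ x) (lcontr (ι ℝ x) M) = 0 := by
  apply eq_of_forall_innE hinn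
  intro L
  rw [hc, hc, ← mul_assoc, ExteriorAlgebra.ι_sq_zero, zero_mul, map_zero, map_zero,
    LinearMap.zero_apply]

lemma gradeProj_lcontr_eq_zero (hinn : InnerOK innE) (hc : ContrOK innE lcontr)
    {x : X} {M : ExteriorAlgebra ℝ X} {p : ℕ} (h : p + 1 < bgrade M) :
    gradeProj p (lcontr (ι ℝ x) M) = 0 := by
  set w := stdOrthonormalBasis ℝ X with hw
  apply gradeProj_eq_zero_of_coefs hinn w
  intro t ht
  rw [innE_symm hinn, hc]
  have hx : ι ℝ x * wedgeOf ⇑w t =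
      ∑ i, w.repr x i • (ι ℝ (w i) * wedgeOf ⇑w t) := by
    conv_lhs => rw [← w.sum_repr x]
    rw [map_sum, Finset.sum_mul]
    simp only [map_smul, smul_mul_assoc]
  rw [hx, map_sum]
  refine Finset.sum_eq_zero fun i _ => ?_
  rw [map_smul, smul_eq_mul]
  by_cases hit : i ∈ t
  · rw [iota_mul_wedgeOf_mem ⇑w t i hit, map_zero, mul_zero]
  · obtain ⟨ε, _, heq⟩ := iota_mul_wedgeOf_notMem ⇑w t i hit
    rw [heq, map_smul, smul_eq_mul, innE_symm hinn M,
      coef_eq_zero_of_gradeProj_eq_zero hinn w (gradeProj_eq_zero_of_lt_bgrade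
        (by rw [Finset.card_insert_of_notMem hit, ht]; exact h)),
      mul_zero, mul_zero]

lemma bgrade_le_bgrade_lcontr (hinn : InnerOK innE) (hc : ContrOK innE lcontr)
    {x : X} {M : ExteriorAlgebra ℝ X} (h : lcontr (ι ℝ x) M ≠ 0) :
    bgrade M ≤ bgrade (lcontr (ι ℝ x) M) + 1 := by
  by_contra hlt
  push_neg at hlt
  exact gradeProj_bgrade_ne_zero hinn h (gradeProj_lcontr_eq_zero hinn hc (by omega))

end ContractionMachinery

section RankBounds

open Module

variable {X : Type*} [NormedAddCommGroup X] [InnerProductSpace ℝ X] [FiniteDimensional ℝ X]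
variable {innE : ExteriorAlgebra ℝ X →ₗ[ℝ] ExteriorAlgebra ℝ X →ₗ[ℝ] ℝ}
variable {lcontr : ExteriorAlgebra ℝ X →ₗ[ℝ] ExteriorAlgebra ℝ X →ₗ[ℝ] ExteriorAlgebra ℝ X}

lemma mem_isp_iff {M : ExteriorAlgebra ℝ X} {x : X} : x ∈ isp M ↔ ι ℝ x * M = 0 := Iff.rfl

lemma mem_ospKer_iff {M : ExteriorAlgebra ℝ X} {x : X} :
    x ∈ ospKer lcontr M ↔ lcontr (ι ℝ x) M = 0 := Iff.rfl

lemma coef_eq_zero_of_isp (hinn : InnerOK innE) (w : OrthonormalBasis (Fin (finrank ℝ X)) ℝ X)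
    {M : ExteriorAlgebra ℝ X} {i : Fin (finrank ℝ X)} (hi : ι ℝ (w i) * M = 0)
    {s : Finset (Fin (finrank ℝ X))} (hs : i ∉ s) : innE (wedgeOf ⇑w s) M = 0 := by
  obtain ⟨ε, hε, hεeq⟩ := iota_mul_wedgeOf_notMem ⇑w s i hs
  have hmul : ι ℝ (w i) * M =
      ∑ t : Finset (Fin (finrank ℝ X)),
        innE (wedgeOf ⇑w t) M • (ι ℝ (w i) * wedgeOf ⇑w t) := by
    conv_lhs => rw [← expand_wedgeOf hinn w M]
    rw [Finset.mul_sum]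
    simp only [mul_smul_comm]
  have h0 : (0:ℝ) = innE (wedgeOf ⇑w (insert i s)) (ι ℝ (w i) * M) := by
    rw [hi, map_zero]
  have hterm : ∀ t ∈ Finset.univ, t ≠ s →
      innE (wedgeOf ⇑w (insert i s))
        (innE (wedgeOf ⇑w t) M • (ι ℝ (w i) * wedgeOf ⇑w t)) = 0 := by
    intro t _ hts
    rw [map_smul, smul_eq_mul]
    by_cases hit : i ∈ t
    · rw [iota_mul_wedgeOf_mem ⇑w t i hit, map_zero, mul_zero]
    · obtain ⟨δ, _, hδ⟩ := iota_mul_wedgeOf_notMem ⇑w t i hit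
      rw [hδ, map_smul, smul_eq_mul, innE_wedge hinn w, if_neg, mul_zero, mul_zero]
      intro hins
      apply hts
      have h2 := congrArg (fun u : Finset (Fin (finrank ℝ X)) => u.erase i) hins
      simpa [Finset.erase_insert hs, Finset.erase_insert hit] using h2.symm
  rw [hmul, map_sum,
    Finset.sum_eq_single s hterm (fun h => absurd (Finset.mem_univ s) h)] at h0
  rw [map_smul, smul_eq_mul, hεeq, map_smul, smul_eq_mul,
    innE_wedge hinn w, if_pos rfl, mul_one] at h0
  rcases hε with rfl | rfl <;> linarith

lemma coef_eq_zero_of_ospKer (hinn : InnerOK innE) (hc : ContrOK innE lcontr)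
    (w : OrthonormalBasis (Fin (finrank ℝ X)) ℝ X)
    {M : ExteriorAlgebra ℝ X} {i : Fin (finrank ℝ X)} (hi : lcontr (ι ℝ (w i)) M = 0)
    {s : Finset (Fin (finrank ℝ X))} (his : i ∈ s) : innE (wedgeOf ⇑w s) M = 0 := by
  have hie : i ∉ s.erase i := Finset.notMem_erase i s
  obtain ⟨ε, hε, heq⟩ := iota_mul_wedgeOf_notMem ⇑w (s.erase i) i hie
  rw [Finset.insert_erase his] at heq
  have hEs : wedgeOf ⇑w s = ε • (ι ℝ (w i) * wedgeOf ⇑w (s.erase i)) := by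
    rw [heq, smul_smul]
    rcases hε with rfl | rfl <;> simp
  rw [hEs, map_smul, LinearMap.smul_apply, smul_eq_mul,
    innE_iota_mul_left hinn hc, hi, map_zero, LinearMap.zero_apply, mul_zero]

lemma card_le_bgrade (hinn : InnerOK innE) (w : OrthonormalBasis (Fin (finrank ℝ X)) ℝ X)
    {M : ExteriorAlgebra ℝ X} (hM : M ≠ 0) (I : Finset (Fin (finrank ℝ X)))
    (hI : ∀ i ∈ I, ι ℝ (w i) * M = 0) : I.card ≤ bgrade M := by
  obtain ⟨t, htc, htne⟩ :=
    exists_coef_of_gradeProj_ne hinn w (gradeProj_bgrade_ne_zero hinn hM)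
  have hsub : I ⊆ t := by
    intro i hi
    by_contra hnot
    exact htne (coef_eq_zero_of_isp hinn w (hI i hi) hnot)
  calc I.card ≤ t.card := Finset.card_le_card hsub
    _ = bgrade M := htc

lemma tgrade_add_card_le (hinn : InnerOK innE) (hc : ContrOK innE lcontr)
    (w : OrthonormalBasis (Fin (finrank ℝ X)) ℝ X)
    {M : ExteriorAlgebra ℝ X} (hM : M ≠ 0) (I : Finset (Fin (finrank ℝ X)))
    (hI : ∀ i ∈ I, lcontr (ι ℝ (w i)) M = 0) : tgrade M + I.card ≤ finrank ℝ X := by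
  obtain ⟨t, htc, htne⟩ :=
    exists_coef_of_gradeProj_ne hinn w (gradeProj_tgrade_ne_zero hinn hM)
  have hdisj : Disjoint t I := by
    rw [Finset.disjoint_left]
    intro i hit hiI
    exact htne (coef_eq_zero_of_ospKer hinn hc w (hI i hiI) hit)
  have hle := Finset.card_le_univ (t ∪ I)
  rw [Finset.card_union_of_disjoint hdisj] at hle
  rw [Fintype.card_fin] at hle
  omega

lemma exists_adapted (S : Submodule ℝ X) :
    ∃ (w : OrthonormalBasis (Fin (finrank ℝ X)) ℝ X) (I : Finset (Fin (finrank ℝ X))),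
      I.card = finrank ℝ S ∧ ∀ i ∈ I, w i ∈ S := by
  have hk : finrank ℝ S ≤ finrank ℝ X := Submodule.finrank_le S
  let b := stdOrthonormalBasis ℝ S
  let f : Fin (finrank ℝ X) → X :=
    fun i => if h : (i : ℕ) < finrank ℝ S then (b ⟨i, h⟩ : X) else 0
  have horth : Orthonormal ℝ
      (Set.restrict {i : Fin (finrank ℝ X) | (i : ℕ) < finrank ℝ S} f) := by
    have hb : Orthonormal ℝ (fun j : Fin (finrank ℝ S) => (b j : X)) :=
      b.orthonormal.comp_linearIsometry S.subtypeₗᵢ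
    have h2 := hb.comp
      (fun p : {i : Fin (finrank ℝ X) | (i : ℕ) < finrank ℝ S} =>
        (⟨(p : Fin (finrank ℝ X)), p.2⟩ : Fin (finrank ℝ S)))
      (fun p q hpq => by
        have h3 := congrArg Fin.val hpq
        exact Subtype.ext (Fin.ext h3))
    convert h2 using 1
    funext p
    simp only [Set.restrict_apply, Function.comp_apply, f]
    exact dif_pos _
  obtain ⟨w, hw⟩ := horth.exists_orthonormalBasis_extension_of_card_eq (by simp)
  refine ⟨w, Finset.univ.map (Fin.castLEEmb hk), by simp, ?_⟩
  intro i hi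
  obtain ⟨j, -, rfl⟩ := Finset.mem_map.mp hi
  have hjk : ((Fin.castLEEmb hk j : Fin (finrank ℝ X)) : ℕ) < finrank ℝ S := j.2
  rw [hw _ hjk]
  simp only [f, dif_pos hjk]
  exact (b _).2

lemma finrank_isp_le_bgrade (hinn : InnerOK innE) {M : ExteriorAlgebra ℝ X} (hM : M ≠ 0) :
    finrank ℝ (isp M) ≤ bgrade M := by
  obtain ⟨w, I, hcard, hmem⟩ := exists_adapted (isp M)
  rw [← hcard]
  exact card_le_bgrade hinn w hM I (fun i hi => hmem i hi)

lemma tgrade_le_finrank_osp (hinn : InnerOK innE) (hc : ContrOK innE lcontr)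
    {M : ExteriorAlgebra ℝ X} (hM : M ≠ 0) :
    tgrade M ≤ finrank ℝ (osp lcontr M) := by
  obtain ⟨w, I, hcard, hmem⟩ := exists_adapted (ospKer lcontr M)
  have h1 := tgrade_add_card_le hinn hc w hM I (fun i hi => hmem i hi)
  have h2 := Submodule.finrank_add_finrank_orthogonal (ospKer lcontr M)
  unfold osp
  omega

end RankBounds

/-- Sums of sufficiently distinct multivectors are inner or
outer balanced. -/
theorem sum_balanced {X : Type*} [NormedAddCommGroup X]
    [InnerProductSpace ℝ X] [FiniteDimensional ℝ X]
    (innE : ExteriorAlgebra ℝ X →ₗ[ℝ] ExteriorAlgebra ℝ X →ₗ[ℝ] ℝ)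
    (lcontr : ExteriorAlgebra ℝ X →ₗ[ℝ] ExteriorAlgebra ℝ X →ₗ[ℝ] ExteriorAlgebra ℝ X)
    (hinn : InnerOK innE) (hc : ContrOK innE lcontr)
    (M N : ExteriorAlgebra ℝ X) (hM0 : M ≠ 0) (hN0 : N ≠ 0) :
    let b := max (bgrade M) (bgrade N)
    let t := min (tgrade M) (tgrade N)
    -- (i)
    ((t + 2 ≤ Module.finrank ℝ ↥(isp M ⊔ isp N) →
        isp (M + N) = isp M ⊓ isp N ∧
        Module.finrank ℝ ↥(isp (M + N)) + 2 ≤ b) ∧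
    -- (ii)
    (Module.finrank ℝ ↥(osp lcontr M ⊓ osp lcontr N) + 2 ≤ b →
        osp lcontr (M + N) = osp lcontr M ⊔ osp lcontr N ∧
        t + 2 ≤ Module.finrank ℝ ↥(osp lcontr (M + N)))) := by
  intro b t
  have hbdef : b = max (bgrade M) (bgrade N) := rfl
  have htdef : t = min (tgrade M) (tgrade N) := rfl
  have hbtM : bgrade M ≤ tgrade M := bgrade_le_tgrade hinn hM0
  have hbtN : bgrade N ≤ tgrade N := bgrade_le_tgrade hinn hN0
  constructor
  -- Part (i)
  · intro hyp
    have hMN : isp (M + N) = isp M ⊓ isp N := by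
      apply le_antisymm
      · intro v hv
        have hv' : ι ℝ v * M + ι ℝ v * N = 0 := by
          have h := (mem_isp_iff).mp hv
          rwa [mul_add] at h
        by_cases hP : ι ℝ v * M = 0
        · have hN' : ι ℝ v * N = 0 := by rwa [hP, zero_add] at hv'
          exact Submodule.mem_inf.mpr ⟨mem_isp_iff.mpr hP, mem_isp_iff.mpr hN'⟩
        · exfalso
          have hPN : ι ℝ v * N = -(ι ℝ v * M) := eq_neg_of_add_eq_zero_right hv'
          have hMP : ι ℝ v * M = -(ι ℝ v * N) := by rw [hPN, neg_neg]
          have hsup : isp M ⊔ isp N ≤ isp (ι ℝ v * M) := by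
            apply sup_le
            · intro u hu
              have hu' : ι ℝ u * M = 0 := mem_isp_iff.mp hu
              refine mem_isp_iff.mpr ?_
              rw [← mul_assoc, iota_swap, neg_mul, mul_assoc, hu', mul_zero, neg_zero]
            · intro u hu
              have hu' : ι ℝ u * N = 0 := mem_isp_iff.mp hu
              refine mem_isp_iff.mpr ?_
              rw [hMP, mul_neg, ← mul_assoc, iota_swap, neg_mul, mul_assoc, hu',
                mul_zero, neg_zero, neg_zero]
          have hrank : t + 2 ≤ Module.finrank ℝ (isp (ι ℝ v * M)) :=
            le_trans hyp (Submodule.finrank_mono hsup)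
          have h1 : Module.finrank ℝ (isp (ι ℝ v * M)) ≤ bgrade (ι ℝ v * M) :=
            finrank_isp_le_bgrade hinn hP
          have h2 : bgrade (ι ℝ v * M) ≤ tgrade (ι ℝ v * M) := bgrade_le_tgrade hinn hP
          have h3 : tgrade (ι ℝ v * M) ≤ tgrade M + 1 := tgrade_iota_mul_le hinn hP
          have h4 : tgrade (ι ℝ v * M) ≤ tgrade N + 1 := by
            have hNn0 : ι ℝ v * N ≠ 0 := by
              rw [hPN]
              exact neg_ne_zero.mpr hP
            have h5 := tgrade_iota_mul_le hinn hNn0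
            rwa [hPN, tgrade_neg] at h5
          omega
      · intro v hv
        obtain ⟨h1, h2⟩ := Submodule.mem_inf.mp hv
        refine mem_isp_iff.mpr ?_
        rw [mul_add, mem_isp_iff.mp h1, mem_isp_iff.mp h2, add_zero]
    refine ⟨hMN, ?_⟩
    have heq := Submodule.finrank_sup_add_finrank_inf_eq (isp M) (isp N)
    have hdM : Module.finrank ℝ (isp M) ≤ bgrade M := finrank_isp_le_bgrade hinn hM0
    have hdN : Module.finrank ℝ (isp N) ≤ bgrade N := finrank_isp_le_bgrade hinn hN0
    rw [hMN]
    omega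
  -- Part (ii)
  · intro hyp
    have hker : ospKer lcontr (M + N) = ospKer lcontr M ⊓ ospKer lcontr N := by
      apply le_antisymm
      · intro v hv
        have hv' : lcontr (ι ℝ v) M + lcontr (ι ℝ v) N = 0 := by
          have h := mem_ospKer_iff.mp hv
          rwa [map_add] at h
        by_cases hP : lcontr (ι ℝ v) M = 0
        · have hN' : lcontr (ι ℝ v) N = 0 := by rwa [hP, zero_add] at hv'
          exact Submodule.mem_inf.mpr ⟨mem_ospKer_iff.mpr hP, mem_ospKer_iff.mpr hN'⟩
        · exfalso
          have hPN : lcontr (ι ℝ v) N = -(lcontr (ι ℝ v) M) := eq_neg_of_add_eq_zero_right hv'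
          have hMP : lcontr (ι ℝ v) M = -(lcontr (ι ℝ v) N) := by rw [hPN, neg_neg]
          have hsub : osp lcontr (lcontr (ι ℝ v) M) ≤ osp lcontr M ⊓ osp lcontr N := by
            apply le_inf
            · apply Submodule.orthogonal_le
              intro u hu
              have hu' : lcontr (ι ℝ u) M = 0 := mem_ospKer_iff.mp hu
              refine mem_ospKer_iff.mpr ?_
              rw [lcontr_iota_iota hinn hc, hu', map_zero, neg_zero]
            · apply Submodule.orthogonal_le
              intro u hu
              have hu' : lcontr (ι ℝ u) N = 0 := mem_ospKer_iff.mp hu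
              refine mem_ospKer_iff.mpr ?_
              rw [hMP, map_neg, lcontr_iota_iota hinn hc, hu', map_zero, neg_zero,
                neg_zero]
          have hmono : Module.finrank ℝ (osp lcontr (lcontr (ι ℝ v) M)) ≤
              Module.finrank ℝ ↥(osp lcontr M ⊓ osp lcontr N) :=
            Submodule.finrank_mono hsub
          have h1 : tgrade (lcontr (ι ℝ v) M) ≤
              Module.finrank ℝ (osp lcontr (lcontr (ι ℝ v) M)) :=
            tgrade_le_finrank_osp hinn hc hP
          have h2 : bgrade M ≤ bgrade (lcontr (ι ℝ v) M) + 1 :=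
            bgrade_le_bgrade_lcontr hinn hc hP
          have h3 : bgrade N ≤ bgrade (lcontr (ι ℝ v) M) + 1 := by
            have hNn0 : lcontr (ι ℝ v) N ≠ 0 := by
              rw [hPN]
              exact neg_ne_zero.mpr hP
            have h5 := bgrade_le_bgrade_lcontr hinn hc hNn0
            rwa [hPN, bgrade_neg] at h5
          have h4 : bgrade (lcontr (ι ℝ v) M) ≤ tgrade (lcontr (ι ℝ v) M) :=
            bgrade_le_tgrade hinn hP
          omega
      · intro v hv
        obtain ⟨h1, h2⟩ := Submodule.mem_inf.mp hv
        refine mem_ospKer_iff.mpr ?_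
        rw [map_add, mem_ospKer_iff.mp h1, mem_ospKer_iff.mp h2, add_zero]
    have hosp : osp lcontr (M + N) = osp lcontr M ⊔ osp lcontr N := by
      unfold osp
      rw [hker]
      have e1 : ospKer lcontr M ⊓ ospKer lcontr N =
          ((ospKer lcontr M)ᗮ ⊔ (ospKer lcontr N)ᗮ)ᗮ := by
        rw [← Submodule.inf_orthogonal, Submodule.orthogonal_orthogonal,
          Submodule.orthogonal_orthogonal]
      rw [e1, Submodule.orthogonal_orthogonal]
    refine ⟨hosp, ?_⟩
    have heq := Submodule.finrank_sup_add_finrank_inf_eq (osp lcontr M) (osp lcontr N)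
    have hdM : tgrade M ≤ Module.finrank ℝ (osp lcontr M) := tgrade_le_finrank_osp hinn hc hM0
    have hdN : tgrade N ≤ Module.finrank ℝ (osp lcontr N) := tgrade_le_finrank_osp hinn hc hN0
    rw [hosp]
    omega

end
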